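/- Fix a real number λ ≠ 0. For all integers n, l with n ≥ l ≥ 0, the degenerate Stirling number of the first kind satisfies S_{1,λ}(n,l) = Σ_{k=l}^{n} S^{(1)}_{J,λ}(n,k) S_{2,λ}(k,l). -/

import Mathlib

open Finset

/-- The degenerate falling factorial `(x)_{n,λ} = x(x−λ)⋯(x−(n−1)λ)`;
for `lam = 1` it is the ordinary falling factorial `(x)_n`. -/
noncomputable def dff (lam : ℝ) (n : ℕ) (x : ℝ) : ℝ :=
  ∏ i ∈ Finset.range n, (x - i * lam)

/-- The degenerate exponential `e_λ^x(t) = Σ_{n≥0} (x)_{n,λ} t^n/n!`. -/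
noncomputable def degExp (lam x : ℝ) : PowerSeries ℝ :=
  PowerSeries.mk fun n => dff lam n x / n.factorial

/-- The degenerate logarithm `log_λ(1+t) = Σ_{n≥1} λ^{n−1}(1)_{n,1/λ} t^n/n!`. -/
noncomputable def degLog (lam : ℝ) : PowerSeries ℝ :=
  PowerSeries.mk fun n =>
    if n = 0 then 0 else lam ^ (n - 1) * dff (1 / lam) n 1 / n.factorial

/-- Composition `f(g(t))` of formal power series (valid definition of composition
when `g` has zero constant term, as in all uses below). -/
noncomputable def pscomp (f g : PowerSeries ℝ) : PowerSeries ℝ :=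
  PowerSeries.mk fun n =>
    ∑ k ∈ Finset.range (n + 1), (PowerSeries.coeff k f) * (PowerSeries.coeff n (g ^ k))


open PowerSeries Polynomial

section dffLemmas

lemma dff_zero (μ x : ℝ) : dff μ 0 x = 1 := by simp [dff]
lemma dff_succ (μ x : ℝ) (n : ℕ) : dff μ (n+1) x = dff μ n x * (x - n*μ) := Finset.prod_range_succ _ _

lemma dff_one_eq (n : ℕ) (x : ℝ) : dff 1 n x = (descPochhammer ℤ n).smeval x := by
  induction n with
  | zero => simp [dff_zero]
  | succ n ih => rw [dff_succ, descPochhammer_succ_right, smeval_mul, ih]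
                 simp [smeval_sub, smeval_X, smeval_natCast]

lemma dff_one_add (n : ℕ) (x y : ℝ) : dff 1 n (x+y) =
    ∑ k ∈ range (n+1), (n.choose k : ℝ) * (dff 1 k x * dff 1 (n-k) y) := by
  rw [dff_one_eq, Ring.descPochhammer_smeval_add n (Commute.all x y)]
  rw [Finset.Nat.sum_antidiagonal_eq_sum_range_succ_mk]
  exact Finset.sum_congr rfl fun k hk => by rw [dff_one_eq, dff_one_eq]

lemma dff_mul_nat_eq_zero {μ : ℝ} {m l : ℕ} (h : m < l) : dff μ l ((m:ℝ)*μ) = 0 := by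
  apply Finset.prod_eq_zero (Finset.mem_range.2 h); ring

lemma prod_range_cast_sub (m : ℕ) : ∏ i ∈ range m, ((m:ℝ) - i) = m.factorial := by
  have : ∀ i ∈ range m, ((m:ℝ) - i) = ((m - i : ℕ) : ℝ) := fun i hi => by
    rw [Nat.cast_sub (le_of_lt (mem_range.1 hi))]
  rw [Finset.prod_congr rfl this, ← Nat.cast_prod]
  congr 1
  rw [← Finset.prod_range_reflect]
  have : ∀ j ∈ range m, m - (m - 1 - j) = j + 1 := fun j hj => by
    have := mem_range.1 hj; omega
  rw [Finset.prod_congr rfl this, Finset.prod_range_add_one_eq_factorial]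

lemma dff_mul_nat_self (μ : ℝ) (m : ℕ) : dff μ m ((m:ℝ)*μ) = μ^m * m.factorial := by
  have : ∀ i ∈ range m, ((m:ℝ)*μ - i*μ) = μ * ((m:ℝ) - i) := fun i _ => by ring
  rw [dff, Finset.prod_congr rfl this, Finset.prod_mul_distrib, Finset.prod_const,
    prod_range_cast_sub, Finset.card_range]

lemma linindep {μ : ℝ} (hμ : μ ≠ 0) (N : ℕ) (a : ℕ → ℝ)
    (h : ∀ m : ℕ, ∑ l ∈ range N, a l * dff μ l ((m:ℝ)*μ) = 0) : ∀ l < N, a l = 0 := by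
  intro l
  induction l using Nat.strong_induction_on with
  | _ l ih =>
    intro hlN
    have h0 := h l
    rw [Finset.sum_eq_single l (fun j hj hne => ?_) (fun hl => absurd (mem_range.2 hlN) hl)] at h0
    · rw [dff_mul_nat_self] at h0
      have : μ^l * (l.factorial : ℝ) ≠ 0 :=
        mul_ne_zero (pow_ne_zero _ hμ) (Nat.cast_ne_zero.2 l.factorial_ne_zero)
      exact (mul_eq_zero.1 h0).resolve_right this
    · rcases lt_or_gt_of_ne hne with hlt | hgt
      · rw [ih j hlt (lt_trans hlt hlN), zero_mul]
      · rw [dff_mul_nat_eq_zero hgt, mul_zero]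

lemma dff_shift (μ : ℝ) (n : ℕ) (y : ℝ) : dff μ (n+1) (y+μ) = (y+μ) * dff μ n y := by
  rw [dff, Finset.prod_range_succ']
  simp only [Nat.cast_zero, zero_mul, sub_zero, Nat.cast_add, Nat.cast_one]
  rw [mul_comm]
  congr 1
  refine Finset.prod_congr rfl fun i _ => ?_
  push_cast; ring

lemma dff_add_base (μ : ℝ) (n : ℕ) (y : ℝ) :
    dff μ (n+1) (y+μ) = dff μ (n+1) y + (n+1) * μ * dff μ n y := by
  rw [dff_shift, dff_succ]; push_cast; ring

lemma dff_at_zero (μ : ℝ) (n : ℕ) (h : 1 ≤ n) : dff μ n 0 = 0 := by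
  apply Finset.prod_eq_zero (Finset.mem_range.2 h : 0 ∈ Finset.range n)
  simp

lemma dff_at_self (μ : ℝ) (n : ℕ) (h : 2 ≤ n) : dff μ n μ = 0 := by
  apply Finset.prod_eq_zero (Finset.mem_range.2 h : 1 ∈ Finset.range n)
  simp

end dffLemmas

section pscompLemmas

lemma coeff_pscomp (f g : PowerSeries ℝ) (n : ℕ) : PowerSeries.coeff n (pscomp f g) =
    ∑ k ∈ Finset.range (n + 1), (PowerSeries.coeff k f) * (PowerSeries.coeff n (g ^ k)) :=
  PowerSeries.coeff_mk _ _

variable {g : PowerSeries ℝ} (hg : PowerSeries.constantCoeff g = 0)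

include hg in
lemma coeff_pow_zero_of_lt : ∀ {k n : ℕ}, n < k → PowerSeries.coeff n (g ^ k) = 0 := by
  intro k
  induction k with
  | zero => intro n h; omega
  | succ k ih =>
    intro n h
    rw [pow_succ, PowerSeries.coeff_mul]
    apply Finset.sum_eq_zero
    rintro ⟨i, j⟩ hij
    rw [Finset.HasAntidiagonal.mem_antidiagonal] at hij
    rcases Nat.eq_zero_or_pos j with hj | hj
    · subst hj
      rw [PowerSeries.coeff_zero_eq_constantCoeff, hg, mul_zero]
    · rw [ih (by omega), zero_mul]

include hg in
lemma pcomp_X : pscomp PowerSeries.X g = g := by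
  ext n
  rw [coeff_pscomp]
  rcases Nat.eq_zero_or_pos n with h | h
  · subst h; simp [PowerSeries.coeff_zero_eq_constantCoeff, hg]
  · rw [Finset.sum_eq_single 1 (fun k _ hk => by
        rw [PowerSeries.coeff_X, if_neg hk, zero_mul])
      (fun hn => absurd (mem_range.2 (by omega)) hn)]
    simp

lemma pcomp_one : pscomp 1 g = 1 := by
  ext n
  rw [coeff_pscomp, Finset.sum_eq_single 0 (fun k _ hk => by
      rw [PowerSeries.coeff_one, if_neg hk, zero_mul])
    (fun hn => absurd (mem_range.2 (by omega)) hn)]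
  simp

lemma pcomp_add (f f' : PowerSeries ℝ) : pscomp (f + f') g = pscomp f g + pscomp f' g := by
  ext n
  simp [coeff_pscomp, add_mul, Finset.sum_add_distrib]

lemma pcomp_C_mul (a : ℝ) (f : PowerSeries ℝ) :
    pscomp (PowerSeries.C a * f) g = PowerSeries.C a * pscomp f g := by
  ext n
  simp [coeff_pscomp, Finset.mul_sum, mul_assoc]

include hg in
lemma pcomp_mul (f f' : PowerSeries ℝ) :
    pscomp (f * f') g = pscomp f g * pscomp f' g := by
  ext n
  rw [coeff_pscomp, PowerSeries.coeff_mul]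
  have key : ∀ p ∈ antidiagonal n, (PowerSeries.coeff p.1 (pscomp f g)) * (PowerSeries.coeff p.2 (pscomp f' g)) =
      ∑ k ∈ range (n+1), ∑ k' ∈ range (n+1),
        (PowerSeries.coeff k f * PowerSeries.coeff k' f') *
          (PowerSeries.coeff p.1 (g^k) * PowerSeries.coeff p.2 (g^k')) := by
    rintro ⟨i, j⟩ hij
    rw [Finset.HasAntidiagonal.mem_antidiagonal] at hij
    rw [coeff_pscomp, coeff_pscomp]
    rw [Finset.sum_subset (Finset.range_subset_range.2 (by omega : i + 1 ≤ n + 1))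
        (fun k _ hk => by rw [coeff_pow_zero_of_lt hg (by simp at hk ⊢; omega), mul_zero]),
      Finset.sum_subset (Finset.range_subset_range.2 (by omega : j + 1 ≤ n + 1))
        (fun k _ hk => by rw [coeff_pow_zero_of_lt hg (by simp at hk ⊢; omega), mul_zero]),
      Finset.sum_mul_sum]
    apply Finset.sum_congr rfl; intro k _; apply Finset.sum_congr rfl; intro k' _; ring
  rw [Finset.sum_congr rfl key, Finset.sum_comm]
  have rhs : ∀ k ∈ range (n+1), (∑ p ∈ antidiagonal n, ∑ k' ∈ range (n+1),
      (PowerSeries.coeff k f * PowerSeries.coeff k' f') *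
        (PowerSeries.coeff p.1 (g^k) * PowerSeries.coeff p.2 (g^k'))) =
      ∑ k' ∈ range (n+1), (PowerSeries.coeff k f * PowerSeries.coeff k' f') *
        PowerSeries.coeff n (g^(k+k')) := by
    intro k _
    rw [Finset.sum_comm]
    refine Finset.sum_congr rfl fun k' _ => ?_
    rw [← Finset.mul_sum, pow_add, PowerSeries.coeff_mul]
  rw [Finset.sum_congr rfl rhs]
  -- LHS
  have lhs1 : ∀ k ∈ range (n+1), PowerSeries.coeff k (f * f') * PowerSeries.coeff n (g^k) =
      ∑ i ∈ range (k+1), PowerSeries.coeff i f * PowerSeries.coeff (k-i) f' *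
        PowerSeries.coeff n (g^k) := by
    intro k _
    rw [PowerSeries.coeff_mul, Finset.Nat.sum_antidiagonal_eq_sum_range_succ_mk, Finset.sum_mul]
  rw [Finset.sum_congr rfl lhs1]
  have swap := Finset.sum_Ico_Ico_comm 0 (n+1) (fun i k =>
    PowerSeries.coeff i f * PowerSeries.coeff (k-i) f' * PowerSeries.coeff n (g^k))
  simp only [Finset.range_eq_Ico] at *
  rw [← swap]
  refine Finset.sum_congr rfl fun i hi => ?_
  rw [Finset.sum_Ico_eq_sum_range]
  simp only [Nat.add_sub_cancel_left]
  rw [← Finset.range_eq_Ico]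
  rw [Finset.sum_subset (Finset.range_subset_range.2 (by omega : n + 1 - i ≤ n + 1))
    (fun t _ ht => by
      rw [coeff_pow_zero_of_lt hg (by simp at ht ⊢; omega), mul_zero])]

include hg in
lemma pcomp_pow (f : PowerSeries ℝ) (m : ℕ) : pscomp (f ^ m) g = (pscomp f g) ^ m := by
  induction m with
  | zero => simpa using pcomp_one
  | succ m ih => rw [pow_succ, pcomp_mul hg, ih, pow_succ]

end pscompLemmas

section degExpLemmas

lemma coeff_degExp (μ x : ℝ) (n : ℕ) :
    PowerSeries.coeff n (degExp μ x) = dff μ n x / n.factorial := coeff_mk _ _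

lemma degExp_zero (μ : ℝ) : degExp μ 0 = 1 := by
  ext n
  rw [coeff_degExp]
  cases n with
  | zero => simp [dff_zero]
  | succ n => rw [dff_at_zero μ _ (by omega)]; simp [Nat.succ_ne_zero]

lemma degExp_mul (x y : ℝ) : degExp 1 x * degExp 1 y = degExp 1 (x + y) := by
  ext n
  rw [PowerSeries.coeff_mul, coeff_degExp, dff_one_add,
    Finset.Nat.sum_antidiagonal_eq_sum_range_succ_mk, Finset.sum_div]
  refine Finset.sum_congr rfl fun k hk => ?_
  have hkn : k ≤ n := by simpa using Nat.lt_succ_iff.1 (Finset.mem_range.1 hk)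
  rw [coeff_degExp, coeff_degExp]
  rw [div_mul_div_comm]
  rw [eq_div_iff (by positivity : (n.factorial : ℝ) ≠ 0)]
  field_simp
  have := Nat.choose_mul_factorial_mul_factorial hkn
  have hcast : (n.choose k : ℝ) * ((k.factorial : ℝ) * (n-k).factorial) = n.factorial := by
    push_cast [← this]; ring
  rw [← hcast]; ring

lemma degExp_one_pow (z : ℝ) (m : ℕ) : (degExp 1 z) ^ m = degExp 1 ((m:ℝ) * z) := by
  induction m with
  | zero => simp [degExp_zero]
  | succ m ih =>
    rw [pow_succ, ih, degExp_mul]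
    push_cast
    ring_nf

lemma degExp_step (μ y : ℝ) : degExp μ (y + μ) = (1 + PowerSeries.C μ * PowerSeries.X) * degExp μ y := by
  ext n
  rw [add_mul, one_mul, mul_assoc, map_add, coeff_degExp]
  cases n with
  | zero =>
    rw [dff_zero]
    simp [coeff_degExp, dff_zero]
  | succ n =>
    rw [PowerSeries.coeff_C_mul, PowerSeries.coeff_succ_X_mul, coeff_degExp, coeff_degExp,
      dff_add_base]
    rw [Nat.factorial_succ]
    push_cast
    have h1 : (n.factorial : ℝ) ≠ 0 := by positivity
    field_simp

lemma degExp_self (μ : ℝ) : degExp μ μ = 1 + PowerSeries.C μ * PowerSeries.X := by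
  have := degExp_step μ 0
  rw [zero_add, degExp_zero, mul_one] at this
  exact this

lemma degExp_nat_mul (μ : ℝ) (m : ℕ) :
    degExp μ ((m:ℝ) * μ) = (1 + PowerSeries.C μ * PowerSeries.X) ^ m := by
  induction m with
  | zero => simp [degExp_zero]
  | succ m ih =>
    have : ((m:ℝ)+1) * μ = (m:ℝ) * μ + μ := by ring
    push_cast
    rw [this, degExp_step, ih, pow_succ, mul_comm]

end degExpLemmas

section degLogLemmas

lemma degLog_constantCoeff (μ : ℝ) : PowerSeries.constantCoeff (degLog μ) = 0 := by
  rw [← PowerSeries.coeff_zero_eq_constantCoeff, degLog, coeff_mk, if_pos rfl]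

lemma one_add_C_mul_degLog (μ : ℝ) (hμ : μ ≠ 0) :
    1 + PowerSeries.C μ * degLog μ = degExp 1 μ := by
  ext n
  rw [map_add, PowerSeries.coeff_C_mul, coeff_degExp, degLog, coeff_mk]
  cases n with
  | zero => simp [dff_zero]
  | succ n =>
    rw [if_neg (Nat.succ_ne_zero n), PowerSeries.coeff_one, if_neg (Nat.succ_ne_zero n),
      zero_add, Nat.succ_sub_one]
    have key : μ * (μ ^ n * dff (1/μ) (n+1) 1) = dff 1 (n+1) μ := by
      rw [dff, dff]
      have h2 : ∀ i ∈ Finset.range (n+1), μ - (i:ℝ)*1 = μ * (1 - (i:ℝ)*(1/μ)) := fun i _ => by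
        field_simp
      rw [Finset.prod_congr rfl h2, Finset.prod_mul_distrib, Finset.prod_const, Finset.card_range]
      ring
    rw [← key]; ring

end degLogLemmas

section anchorLemma

lemma anchor (lam : ℝ) (hlam : lam ≠ 0) (m n : ℕ) :
    ∑ k ∈ Finset.range (n+1), dff lam k ((m:ℝ)*lam) / k.factorial *
      PowerSeries.coeff n ((degLog lam)^k) = dff 1 n ((m:ℝ)*lam) / n.factorial := by
  have hc := degLog_constantCoeff lam
  have comp : pscomp (degExp lam ((m:ℝ)*lam)) (degLog lam) = degExp 1 ((m:ℝ)*lam) := by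
    rw [degExp_nat_mul, pcomp_pow hc, pcomp_add, pcomp_one, pcomp_C_mul, pcomp_X hc,
      one_add_C_mul_degLog lam hlam, degExp_one_pow]
  have h := congrArg (PowerSeries.coeff n) comp
  rw [coeff_pscomp, coeff_degExp] at h
  simp only [coeff_degExp] at h
  exact h

end anchorLemma

theorem stirling1_via_jindalrae1 (lam : ℝ) (hlam : lam ≠ 0)
    (S1 S2 SJ1 : ℕ → ℕ → ℝ)
    (hS1 : ∀ (n : ℕ) (x : ℝ), dff 1 n x = ∑ l ∈ Finset.range (n + 1), S1 n l * dff lam l x)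
    (hS2 : ∀ (n : ℕ) (x : ℝ), dff lam n x = ∑ k ∈ Finset.range (n + 1), S2 n k * dff 1 k x)
    (hSJ1 : ∀ k : ℕ, (PowerSeries.C ((k.factorial : ℝ))⁻¹) * (pscomp (degLog lam) (degLog lam)) ^ k = PowerSeries.mk (fun n => if k ≤ n then SJ1 n k / n.factorial else 0))
    : ∀ n l : ℕ, l ≤ n → S1 n l = ∑ k ∈ Finset.Icc l n, SJ1 n k * S2 k l := by
  have hc : PowerSeries.constantCoeff (degLog lam) = 0 := degLog_constantCoeff lam
  -- Lemma C : generating function of S1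
  have hC : ∀ n l : ℕ, l ≤ n →
      PowerSeries.coeff n ((degLog lam)^l) = l.factorial * S1 n l / n.factorial := by
    intro n
    have key := linindep hlam (n+1)
      (fun l => S1 n l / n.factorial - PowerSeries.coeff n ((degLog lam)^l) / l.factorial) ?_
    · intro l hl
      have h := key l (by omega)
      rw [sub_eq_zero] at h
      have h1 : (n.factorial : ℝ) ≠ 0 := by positivity
      have h2 : (l.factorial : ℝ) ≠ 0 := by positivity
      field_simp at h ⊢
      linarith
    · intro m
      have e1 : ∑ l ∈ Finset.range (n+1),
          (S1 n l / n.factorial) * dff lam l ((m:ℝ)*lam) = dff 1 n ((m:ℝ)*lam) / n.factorial := by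
        rw [hS1 n ((m:ℝ)*lam), Finset.sum_div]
        exact Finset.sum_congr rfl fun l _ => by ring
      have e2 : ∑ l ∈ Finset.range (n+1),
          (PowerSeries.coeff n ((degLog lam)^l) / l.factorial) * dff lam l ((m:ℝ)*lam)
            = dff 1 n ((m:ℝ)*lam) / n.factorial := by
        rw [← anchor lam hlam m n]
        exact Finset.sum_congr rfl fun l _ => by ring
      simp only [sub_mul]
      rw [Finset.sum_sub_distrib, e1, e2, sub_self]
  -- Orthogonality
  have hOrth : ∀ n j : ℕ, j ≤ n →
      ∑ k ∈ Finset.Icc j n, S1 n k * S2 k j = if n = j then 1 else 0 := by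
    intro n
    have key := linindep (one_ne_zero) (n+1)
      (fun j => (∑ k ∈ Finset.Icc j n, S1 n k * S2 k j) - (if n = j then 1 else 0)) ?_
    · intro j hj
      have h := key j (by omega)
      rw [sub_eq_zero] at h
      exact h
    · intro m
      have e1 : ∑ j ∈ Finset.range (n+1),
          (∑ k ∈ Finset.Icc j n, S1 n k * S2 k j) * dff 1 j ((m:ℝ)*1) = dff 1 n ((m:ℝ)*1) := by
        rw [hS1 n ((m:ℝ)*1)]
        have step : ∀ k ∈ Finset.range (n+1), S1 n k * dff lam k ((m:ℝ)*1) =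
            ∑ j ∈ Finset.range (k+1), S1 n k * S2 k j * dff 1 j ((m:ℝ)*1) := fun k _ => by
          rw [hS2 k ((m:ℝ)*1), Finset.mul_sum]
          exact Finset.sum_congr rfl fun j _ => by ring
        rw [Finset.sum_congr rfl step]
        have swap : ∑ k ∈ Finset.range (n+1), ∑ j ∈ Finset.range (k+1),
            S1 n k * S2 k j * dff 1 j ((m:ℝ)*1)
            = ∑ j ∈ Finset.range (n+1), ∑ k ∈ Finset.Icc j n,
              S1 n k * S2 k j * dff 1 j ((m:ℝ)*1) := by
          have comm := Finset.sum_Ico_Ico_comm 0 (n+1)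
            (fun j k => S1 n k * S2 k j * dff 1 j ((m:ℝ)*1))
          simp only [Finset.Ico_add_one_right_eq_Icc, Nat.Icc_eq_range', Finset.range_eq_Ico] at comm ⊢
          exact comm.symm
        rw [swap]
        refine (Finset.sum_congr rfl fun j _ => ?_).symm
        rw [Finset.sum_mul]
      have e2 : ∑ j ∈ Finset.range (n+1),
          (if n = j then (1:ℝ) else 0) * dff 1 j ((m:ℝ)*1) = dff 1 n ((m:ℝ)*1) := by
        rw [Finset.sum_eq_single n (fun j _ hne => by rw [if_neg (Ne.symm hne), zero_mul])
          (fun hn => absurd (Finset.mem_range.2 (by omega)) hn)]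
        rw [if_pos rfl, one_mul]
      simp only [sub_mul]
      rw [Finset.sum_sub_distrib, e1, e2, sub_self]
  -- SJ1 via S1 ∘ S1
  have hSJ : ∀ n k : ℕ, k ≤ n → SJ1 n k = ∑ m ∈ Finset.Icc k n, S1 n m * S1 m k := by
    intro n k hkn
    have h1 := congrArg (PowerSeries.coeff n) (hSJ1 k)
    rw [PowerSeries.coeff_mk, if_pos hkn, PowerSeries.coeff_C_mul,
      ← pcomp_pow hc (degLog lam) k, coeff_pscomp] at h1
    have hsub : Finset.Icc k n ⊆ Finset.range (n+1) := fun m hm => by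
      simp at hm ⊢; omega
    rw [← Finset.sum_subset hsub (fun m hmem hm => by
      rw [coeff_pow_zero_of_lt hc (by simp at hmem hm ⊢; omega), zero_mul])] at h1
    have e : ∀ m ∈ Finset.Icc k n,
        PowerSeries.coeff m ((degLog lam)^k) * PowerSeries.coeff n ((degLog lam)^m) =
          (k.factorial : ℝ) * (S1 n m * S1 m k) / n.factorial := by
      intro m hm
      rw [Finset.mem_Icc] at hm
      rw [hC m k hm.1, hC n m hm.2]
      have h2 : (m.factorial : ℝ) ≠ 0 := by positivity
      field_simp
    rw [Finset.sum_congr rfl e, ← Finset.sum_div, ← Finset.mul_sum] at h1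
    have h1' : (∑ m ∈ Finset.Icc k n, S1 n m * S1 m k) / n.factorial = SJ1 n k / n.factorial := by
      have hk : (k.factorial : ℝ) ≠ 0 := by positivity
      field_simp at h1 ⊢
      linarith
    have hn : (n.factorial : ℝ) ≠ 0 := by positivity
    field_simp at h1'
    linarith
  -- Final assembly
  intro n l hln
  have step : ∀ k ∈ Finset.Icc l n, SJ1 n k * S2 k l =
      ∑ m ∈ Finset.Icc k n, S1 n m * (S1 m k * S2 k l) := fun k hk => by
    rw [Finset.mem_Icc] at hk
    rw [hSJ n k hk.2, Finset.sum_mul]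
    exact Finset.sum_congr rfl fun m _ => by ring
  rw [Finset.sum_congr rfl step]
  have swap2 : ∑ k ∈ Finset.Icc l n, ∑ m ∈ Finset.Icc k n, S1 n m * (S1 m k * S2 k l)
      = ∑ m ∈ Finset.Icc l n, ∑ k ∈ Finset.Icc l m, S1 n m * (S1 m k * S2 k l) := by
    have comm := Finset.sum_Ico_Ico_comm l (n+1)
      (fun k m => S1 n m * (S1 m k * S2 k l))
    simp only [Finset.Ico_add_one_right_eq_Icc] at comm
    exact comm
  rw [swap2]
  have fin : ∀ m ∈ Finset.Icc l n, (∑ k ∈ Finset.Icc l m, S1 n m * (S1 m k * S2 k l)) =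
      S1 n m * (if m = l then 1 else 0) := by
    intro m hm
    rw [Finset.mem_Icc] at hm
    rw [← Finset.mul_sum]
    congr 1
    rw [← hOrth m l hm.1]
  rw [Finset.sum_congr rfl fin]
  rw [Finset.sum_eq_single l (fun m _ hne => by rw [if_neg hne, mul_zero])
    (fun hl => absurd (Finset.mem_Icc.2 (by omega)) hl)]
  rw [if_pos rfl, mul_one]
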